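/- Fix α ∈ (0,1) and λ > 0. Let E₁ be a random variable with the Exp(1) distribution and set R₁ = (λ^α/(E₁ + λ^α))^{1/α}. Then R₁ takes values in (0,1) and its law has Lebesgue density r ↦ α λ^α e^{λ^α} e^{-λ^α/r^α} r^{-α-1} on (0,1). -/

import Mathlib

open MeasureTheory Set

theorem lint_image {s : Set ℝ} {f f' : ℝ → ℝ}
    (hs : MeasurableSet s) (hf' : ∀ x ∈ s, HasDerivWithinAt f (f' x) s x)
    (hf : InjOn f s) (g : ℝ → ENNReal) :
    ∫⁻ x in f '' s, g x = ∫⁻ x in s, ENNReal.ofReal |f' x| * g (f x) := by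
  simpa only [ContinuousLinearMap.det_toSpanSingleton] using
    lintegral_image_eq_lintegral_abs_det_fderiv_mul volume hs
      (fun x hx => (hf' x hx).hasFDerivWithinAt) hf g

theorem lint_Ioi (a : ℝ) :
    ∫⁻ t in Ioi a, ENNReal.ofReal (Real.exp (-t)) = ENNReal.ofReal (Real.exp (-a)) := by
  rw [← ofReal_integral_eq_lintegral_ofReal]
  · rw [integral_exp_neg_Ioi]
  · exact (by simpa using exp_neg_integrableOn_Ioi a zero_lt_one :
      IntegrableOn (fun t => Real.exp (-t)) (Ioi a))
  · filter_upwards with t using (Real.exp_pos _).le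

theorem lint_Ici (a : ℝ) :
    ∫⁻ t in Ici a, ENNReal.ofReal (Real.exp (-t)) = ENNReal.ofReal (Real.exp (-a)) := by
  rw [← Measure.restrict_congr_set Ioi_ae_eq_Ici, lint_Ioi]

-- image of ψ
theorem psi_image {α c x : ℝ} (hα0 : 0 < α) (hc : 0 < c) (hx : 0 < x) :
    (fun r : ℝ => c * r ^ (-α) - c) '' Ioc 0 x = Ici (c * x ^ (-α) - c) := by
  ext t
  simp only [mem_image, mem_Ici, mem_Ioc]
  constructor
  · rintro ⟨r, ⟨hr0, hrx⟩, rfl⟩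
    have h1 : x ^ (-α) ≤ r ^ (-α) := Real.rpow_le_rpow_of_nonpos hr0 hrx (by linarith)
    nlinarith
  · intro ht
    have hxa : (0:ℝ) < x ^ (-α) := Real.rpow_pos_of_pos hx _
    have htc : 0 < t + c := by nlinarith
    have hdiv : 0 < c / (t + c) := div_pos hc htc
    refine ⟨(c / (t + c)) ^ α⁻¹, ⟨Real.rpow_pos_of_pos hdiv _, ?_⟩, ?_⟩
    · have hxα : (0:ℝ) < x ^ α := Real.rpow_pos_of_pos hx α
      have hxx : x ^ α * x ^ (-α) = 1 := by
        rw [← Real.rpow_add hx]; simp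
      have h1 : c / (t + c) ≤ x ^ α := by
        rw [div_le_iff₀ htc]
        nlinarith [mul_le_mul_of_nonneg_left (show c * x ^ (-α) ≤ t + c by linarith) hxα.le]
      calc (c / (t + c)) ^ α⁻¹ ≤ (x ^ α) ^ α⁻¹ :=
            Real.rpow_le_rpow hdiv.le h1 (by positivity)
        _ = x := Real.rpow_rpow_inv hx.le hα0.ne'
    · have h2 : ((c / (t + c)) ^ α⁻¹) ^ (-α) = (t + c) / c := by
        rw [← Real.rpow_mul hdiv.le, show α⁻¹ * (-α) = -1 by field_simp,
          Real.rpow_neg_one, inv_div]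
      rw [h2]; field_simp; ring

theorem stmt6_key {α c : ℝ} (hα0 : 0 < α) (hc : 0 < c) (x : ℝ) (hx : 0 < x) :
    ∫⁻ r in Ioc 0 x,
        ENNReal.ofReal (α * c * Real.exp c * Real.exp (-c / r ^ α) * r ^ (-α - 1))
      = ENNReal.ofReal (Real.exp (-(c * x ^ (-α) - c))) := by
  have hderiv : ∀ r ∈ Ioc 0 x,
      HasDerivWithinAt (fun r : ℝ => c * r ^ (-α) - c)
        (c * (-α * r ^ (-α - 1))) (Ioc 0 x) r := fun r hr =>
    (((Real.hasDerivAt_rpow_const (Or.inl hr.1.ne')).const_mul c).sub_const c).hasDerivWithinAt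
  have hinj : InjOn (fun r : ℝ => c * r ^ (-α) - c) (Ioc 0 x) := by
    intro r hr r' hr' h
    simp only at h
    have h2 : r ^ (-α) = r' ^ (-α) := mul_left_cancel₀ hc.ne' (by linarith)
    have h3 := congrArg (fun z : ℝ => z ^ (-α)⁻¹) h2
    simpa only [Real.rpow_rpow_inv hr.1.le (by simpa using hα0.ne' : -α ≠ 0),
      Real.rpow_rpow_inv hr'.1.le (by simpa using hα0.ne' : -α ≠ 0)] using h3
  have himg := lint_image measurableSet_Ioc hderiv hinj
    (fun t => ENNReal.ofReal (Real.exp (-t)))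
  rw [psi_image hα0 hc hx, lint_Ici] at himg
  rw [himg]
  apply setLIntegral_congr_fun measurableSet_Ioc
  intro r hr
  beta_reduce
  have hr0 : 0 < r := hr.1
  have hp : (0:ℝ) < r ^ (-α - 1) := Real.rpow_pos_of_pos hr0 _
  have habs : |c * (-α * r ^ (-α - 1))| = α * c * r ^ (-α - 1) := by
    rw [abs_of_neg (by nlinarith [mul_pos (mul_pos hc hα0) hp])]; ring
  rw [habs, ← ENNReal.ofReal_mul (by positivity)]
  congr 1
  have hre : -c / r ^ α = -(c * r ^ (-α)) := by
    rw [Real.rpow_neg hr0.le, neg_div]; ring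
  rw [hre, show -(c * r ^ (-α) - c) = c + -(c * r ^ (-α)) by ring, Real.exp_add]
  ring

/-- The Exp(1) distribution, with density `e^{-t}` on `(0,∞)`. -/
noncomputable def expM : Measure ℝ :=
  volume.withDensity ((Set.Ioi (0 : ℝ)).indicator fun t => ENNReal.ofReal (Real.exp (-t)))

/-- **Lemma 2(i).** For `E₁ ~ Exp(1)` and `R₁ = (λ^α/(E₁ + λ^α))^{1/α}`, the variable `R₁`
takes values in `(0,1)` and its law has Lebesgue density
`r ↦ α λ^α e^{λ^α} e^{-λ^α/r^α} r^{-α-1}` on `(0,1)`. -/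
theorem stmt6 (α : ℝ) (hα : α ∈ Set.Ioo (0 : ℝ) 1) (lam : ℝ) (hlam : 0 < lam) :
    (∀ᵐ t ∂expM, (lam ^ α / (t + lam ^ α)) ^ (1 / α) ∈ Set.Ioo (0 : ℝ) 1) ∧
      Measure.map (fun t => (lam ^ α / (t + lam ^ α)) ^ (1 / α)) expM
        = volume.withDensity ((Set.Ioo (0 : ℝ) 1).indicator fun r =>
            ENNReal.ofReal (α * lam ^ α * Real.exp (lam ^ α) *
              Real.exp (-(lam ^ α) / r ^ α) * r ^ (-α - 1))) := by
  obtain ⟨hα0, hα1⟩ := hα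
  have hφm : Measurable (fun t : ℝ => (lam ^ α / (t + lam ^ α)) ^ (1 / α)) := by fun_prop
  set c := lam ^ α with hc_def
  have hc : 0 < c := Real.rpow_pos_of_pos hlam α
  set φ : ℝ → ℝ := fun t => (c / (t + c)) ^ (1 / α) with hφ_def
  have hφ : Measurable φ := hφm
  have hmem : ∀ t ∈ Ioi (0:ℝ), φ t ∈ Ioo (0:ℝ) 1 := by
    intro t ht
    have ht0 : 0 < t := mem_Ioi.1 ht
    have htc : 0 < t + c := by linarith
    have hdiv : 0 < c / (t + c) := div_pos hc htc
    refine ⟨Real.rpow_pos_of_pos hdiv _, Real.rpow_lt_one hdiv.le ?_ (by positivity)⟩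
    rw [div_lt_one htc]; linarith
  have hcompl : expM (Ioi (0:ℝ))ᶜ = 0 := by
    rw [expM, withDensity_apply _ measurableSet_Ioi.compl,
      setLIntegral_indicator measurableSet_Ioi]
    simp [Ioi_inter_Iic]
  constructor
  · rw [ae_iff]
    refine measure_mono_null ?_ hcompl
    intro t ht
    simp only [mem_setOf_eq] at ht
    simp only [mem_compl_iff, mem_Ioi, not_lt]
    by_contra h
    push_neg at h
    exact ht (hmem t h)
  · haveI : IsFiniteMeasure expM := by
      constructor
      rw [expM, withDensity_apply _ MeasurableSet.univ, Measure.restrict_univ,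
        lintegral_indicator measurableSet_Ioi, lint_Ioi]
      exact ENNReal.ofReal_lt_top
    haveI : IsFiniteMeasure (Measure.map φ expM) := by
      constructor
      rw [Measure.map_apply hφ MeasurableSet.univ]
      exact measure_lt_top _ _
    apply Measure.ext_of_Iic
    intro x
    rw [Measure.map_apply hφ measurableSet_Iic, expM,
      withDensity_apply _ (hφ measurableSet_Iic),
      setLIntegral_indicator measurableSet_Ioi,
      withDensity_apply _ measurableSet_Iic,
      setLIntegral_indicator measurableSet_Ioo]
    rcases le_or_gt x 0 with hx | hx
    · have h1 : Ioi (0:ℝ) ∩ φ ⁻¹' Iic x = ∅ := by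
        ext t
        simp only [mem_inter_iff, mem_Ioi, mem_preimage, mem_Iic, mem_empty_iff_false,
          iff_false, not_and]
        intro ht hle
        exact absurd hle (not_le.2 (lt_of_le_of_lt hx (hmem t ht).1))
      have h2 : Ioo (0:ℝ) 1 ∩ Iic x = ∅ := by
        ext r
        simp only [mem_inter_iff, mem_Ioo, mem_Iic, mem_empty_iff_false, iff_false, not_and]
        rintro ⟨h1', _⟩ h3
        linarith
      rw [h1, h2]; simp
    · rcases lt_or_ge x 1 with hx1 | hx1
      · have hxa : (0:ℝ) < x ^ (-α) := Real.rpow_pos_of_pos hx _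
        have hxα : (0:ℝ) < x ^ α := Real.rpow_pos_of_pos hx α
        have hxx : x ^ α * x ^ (-α) = 1 := by rw [← Real.rpow_add hx]; simp
        have hone : (1:ℝ) < x ^ (-α) := by
          rw [Real.one_lt_rpow_iff_of_pos hx]; right; exact ⟨hx1, by linarith⟩
        have ha : 0 < c * x ^ (-α) - c := by nlinarith
        have hset : Ioi (0:ℝ) ∩ φ ⁻¹' Iic x = Ici (c * x ^ (-α) - c) := by
          ext t
          simp only [mem_inter_iff, mem_Ioi, mem_preimage, mem_Iic, mem_Ici, hφ_def]
          constructor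
          · rintro ⟨ht, hle⟩
            have htc : 0 < t + c := by linarith
            have hdiv : 0 < c / (t + c) := div_pos hc htc
            have h2 : c / (t + c) ≤ x ^ α := by
              have h3 := Real.rpow_le_rpow (Real.rpow_pos_of_pos hdiv (1/α)).le hle hα0.le
              rwa [one_div, Real.rpow_inv_rpow hdiv.le hα0.ne'] at h3
            rw [div_le_iff₀ htc] at h2
            nlinarith [mul_le_mul_of_nonneg_left h2 hxa.le]
          · intro ht
            have ht0 : 0 < t := by nlinarith
            refine ⟨ht0, ?_⟩
            have htc : 0 < t + c := by linarith
            have hdiv : 0 < c / (t + c) := div_pos hc htc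
            have h2 : c / (t + c) ≤ x ^ α := by
              rw [div_le_iff₀ htc]
              nlinarith [mul_le_mul_of_nonneg_left
                (show c * x ^ (-α) ≤ t + c by linarith) hxα.le]
            calc (c / (t + c)) ^ (1/α) ≤ (x ^ α) ^ (1/α) :=
                  Real.rpow_le_rpow hdiv.le h2 (by positivity)
              _ = x := by rw [one_div, Real.rpow_rpow_inv hx.le hα0.ne']
        have hset2 : Ioo (0:ℝ) 1 ∩ Iic x = Ioc 0 x := by
          ext r
          simp only [mem_inter_iff, mem_Ioo, mem_Iic, mem_Ioc]
          constructor
          · rintro ⟨⟨h1', _⟩, h3⟩; exact ⟨h1', h3⟩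
          · rintro ⟨h1', h3⟩; exact ⟨⟨h1', lt_of_le_of_lt h3 hx1⟩, h3⟩
        rw [hset, hset2, lint_Ici, stmt6_key hα0 hc x hx]
      · have hset : Ioi (0:ℝ) ∩ φ ⁻¹' Iic x = Ioi 0 := by
          apply inter_eq_left.2
          intro t ht
          exact le_trans (hmem t ht).2.le hx1
        have hset2 : Ioo (0:ℝ) 1 ∩ Iic x = Ioo 0 1 := by
          apply inter_eq_left.2
          intro r hr
          exact le_trans hr.2.le hx1
        rw [hset, hset2, lint_Ioi,
          Measure.restrict_congr_set Ioo_ae_eq_Ioc, stmt6_key hα0 hc 1 one_pos]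
        norm_num [Real.one_rpow]
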